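/- arXiv:1812.02543 — 4 statements merged into one kernel-verified Lean document; each statement's English description precedes it below -/
import Mathlib

section
/- Let (W,S) be a Coxeter system and let w, w' ∈ W with ℓ(w) = ℓ(w'). If w → w', then w and w' are tightly conjugate (w ≈_t w'). -/
open CoxeterSystem

variable {B W : Type*} [Group W] {M : CoxeterMatrix B}

/-- `w →ˢ w'`: one elementary conjugation by a simple reflection, not increasing length. -/
def ConjStep (cs : CoxeterSystem M W) (w w' : W) : Prop :=
  ∃ i : B, w' = cs.simple i * w * cs.simple i ∧ cs.length w' ≤ cs.length w

/-- `w → w'`: a finite chain of elementary conjugations. -/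
def ConjMove (cs : CoxeterSystem M W) : W → W → Prop :=
  Relation.ReflTransGen (ConjStep cs)

/-- `u` has minimal length in its conjugacy class. -/
def IsMinimalLength (cs : CoxeterSystem M W) (u : W) : Prop :=
  ∀ v : W, cs.length u ≤ cs.length (v⁻¹ * u * v)

/-- The standard parabolic subgroup `W_I`. -/
def StandardParabolic (cs : CoxeterSystem M W) (I : Set B) : Subgroup W :=
  Subgroup.closure (cs.simple '' I)

/-- `I` is spherical if `W_I` is finite. -/
def IsSpherical (cs : CoxeterSystem M W) (I : Set B) : Prop :=
  (StandardParabolic cs I : Set W).Finite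

/-- `w ≈ˣ w'`: elementarily strongly conjugate via `x`. -/
def ElemStrong (cs : CoxeterSystem M W) (x w w' : W) : Prop :=
  cs.length w = cs.length w' ∧ w' = x⁻¹ * w * x ∧
    (cs.length (x⁻¹ * w) = cs.length x + cs.length w ∨
     cs.length (w * x) = cs.length w + cs.length x)

/-- `w ∼ w'`: strongly conjugate. -/
def StrongConj (cs : CoxeterSystem M W) : W → W → Prop :=
  Relation.ReflTransGen (fun w w' => ∃ x : W, ElemStrong cs x w w')

/-- `w` and `w'` are elementarily tightly conjugate. -/
def ElemTight (cs : CoxeterSystem M W) (w w' : W) : Prop :=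
  cs.length w = cs.length w' ∧
    ((∃ i : B, w' = cs.simple i * w * cs.simple i) ∨
     (∃ I : Set B, IsSpherical cs I ∧ w ∈ Subgroup.normalizer (StandardParabolic cs I : Set W) ∧
       ∃ x ∈ StandardParabolic cs I, ElemStrong cs x w w'))

/-- `w ≈_t w'`: tightly conjugate. -/
def TightConj (cs : CoxeterSystem M W) : W → W → Prop :=
  Relation.ReflTransGen (ElemTight cs)

/-- `w` is elementarily related to `w'`: `w'` is a cyclic shift `s_k ⋯ s_d s_1 ⋯ s_{k-1}`
(`k ∈ {1, …, d}`) of some reduced decomposition `w = s_1 ⋯ s_d` of `w`. -/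
def ElemRelated (cs : CoxeterSystem M W) (w w' : W) : Prop :=
  ∃ ω : List B, cs.wordProd ω = w ∧ cs.IsReduced ω ∧
    ∃ k, 1 ≤ k ∧ k ≤ ω.length ∧ w' = cs.wordProd (ω.drop (k - 1) ++ ω.take (k - 1))

/-- `w ∼_κ w'`: related by a finite chain of cyclic shifts. -/
def KappaConj (cs : CoxeterSystem M W) : W → W → Prop :=
  Relation.ReflTransGen (ElemRelated cs)

/-- `w'` is a cyclic shift `s_{r+1} ⋯ s_d s_1 ⋯ s_r` (`r ∈ {1, …, d}`) of some reduced
decomposition `w = s_1 ⋯ s_d` of `w`. -/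
def CyclicShift (cs : CoxeterSystem M W) (w w' : W) : Prop :=
  ∃ ω : List B, cs.wordProd ω = w ∧ cs.IsReduced ω ∧
    ∃ r, 1 ≤ r ∧ r ≤ ω.length ∧ w' = cs.wordProd (ω.drop r ++ ω.take r)

/-- `w` is straight if `ℓ(wⁿ) = n ℓ(w)` for all `n : ℕ`. -/
def IsStraight (cs : CoxeterSystem M W) (w : W) : Prop :=
  ∀ n : ℕ, cs.length (w ^ n) = n * cs.length w

lemma length_le_of_conjMove (cs : CoxeterSystem M W) {w w' : W} (h : ConjMove cs w w') :
    cs.length w' ≤ cs.length w := by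
  induction h with
  | refl => exact le_refl _
  | tail _ hstep ih =>
    obtain ⟨i, _, hle⟩ := hstep
    exact le_trans hle ih

/-- If `ℓ(w) = ℓ(w')` and `w → w'`, then `w ≈_t w'`. -/
theorem tightConj_of_conjMove (cs : CoxeterSystem M W) (w w' : W)
    (hlen : cs.length w = cs.length w') (h : ConjMove cs w w') :
    TightConj cs w w' := by
  induction h using Relation.ReflTransGen.head_induction_on with
  | refl => exact Relation.ReflTransGen.refl
  | head hstep hrest ih =>
    rename_i a b
    obtain ⟨i, hb, hle⟩ := hstep
    have hb_len : cs.length a = cs.length b := by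
      have h1 : cs.length w' ≤ cs.length b := length_le_of_conjMove cs hrest
      omega
    exact Relation.ReflTransGen.head ⟨hb_len, Or.inl ⟨i, hb⟩⟩ (ih (hb_len ▸ hlen))
end

section
/- Let (W,S) be a Coxeter system, let w, u, x ∈ W and let ε ∈ {1, −1}. If ℓ(u⁻¹wᵉu) = ℓ(u⁻¹x) + ℓ(x⁻¹wᵉu), then ℓ(x⁻¹wx) ≤ ℓ(u⁻¹wu). In particular, if u⁻¹wu is of minimal length in the conjugacy class of w, then so is x⁻¹wx. -/
open CoxeterSystem

variable {B W : Type*} [Group W] {M : CoxeterMatrix B}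

/-- `CMin(w)` is `w`-convex: if `xC₀` lies on a minimal gallery from `uC₀` to `wᵉuC₀`,
then `ℓ(x⁻¹wx) ≤ ℓ(u⁻¹wu)`; in particular minimality of `u⁻¹wu` passes to `x⁻¹wx`. -/
theorem cmin_w_convex (cs : CoxeterSystem M W) (w u x : W) (ε : ℤ)
    (hε : ε = 1 ∨ ε = -1)
    (h : cs.length (u⁻¹ * w ^ ε * u) =
      cs.length (u⁻¹ * x) + cs.length (x⁻¹ * w ^ ε * u)) :
    cs.length (x⁻¹ * w * x) ≤ cs.length (u⁻¹ * w * u) ∧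
      (IsMinimalLength cs (u⁻¹ * w * u) → IsMinimalLength cs (x⁻¹ * w * x)) := by
  have key : cs.length (x⁻¹ * w ^ ε * x) ≤ cs.length (u⁻¹ * w ^ ε * u) := by
    have e1 : x⁻¹ * w ^ ε * x = (x⁻¹ * w ^ ε * u) * (u⁻¹ * x) := by group
    calc cs.length (x⁻¹ * w ^ ε * x)
        ≤ cs.length (x⁻¹ * w ^ ε * u) + cs.length (u⁻¹ * x) := by
          rw [e1]; exact cs.length_mul_le _ _
      _ = cs.length (u⁻¹ * x) + cs.length (x⁻¹ * w ^ ε * u) := by omega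
      _ = cs.length (u⁻¹ * w ^ ε * u) := h.symm
  have main : cs.length (x⁻¹ * w * x) ≤ cs.length (u⁻¹ * w * u) := by
    rcases hε with rfl | rfl
    · simpa using key
    · have hx : x⁻¹ * w ^ (-1 : ℤ) * x = (x⁻¹ * w * x)⁻¹ := by
        simp [zpow_neg_one]; group
      have hu : u⁻¹ * w ^ (-1 : ℤ) * u = (u⁻¹ * w * u)⁻¹ := by
        simp [zpow_neg_one]; group
      rw [hx, hu, cs.length_inv, cs.length_inv] at key
      exact key
  refine ⟨main, fun hmin v => ?_⟩
  have h2 := hmin (u⁻¹ * (x * v))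
  have e2 : (u⁻¹ * (x * v))⁻¹ * (u⁻¹ * w * u) * (u⁻¹ * (x * v))
      = v⁻¹ * (x⁻¹ * w * x) * v := by group
  rw [e2] at h2
  exact le_trans main h2
end

section
/- Let (W,S) be a Coxeter system, let w ∈ W be straight, let I ⊆ S be a spherical subset, and let u ∈ W be such that u⁻¹wu normalises W_I. If a, b ∈ W_I are such that both (ua)⁻¹w(ua) and (ub)⁻¹w(ub) are of minimal length in the conjugacy class of w, then (ua)⁻¹w(ua) = (ub)⁻¹w(ub). -/
open CoxeterSystem

variable {B W : Type*} [Group W] {M : CoxeterMatrix B}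

section AuxStraight

open Classical in
noncomputable def eqInd {X : Type*} (t r : X) : ZMod 2 := if t = r then 1 else 0
lemma eqInd_iff {X : Type*} {t r t' r' : X} (h : (t = r) ↔ (t' = r')) :
    eqInd t r = eqInd t' r' := by
  by_cases hc : t = r
  · simp only [eqInd, if_pos hc, if_pos (h.mp hc)]
  · simp only [eqInd, if_neg hc, if_neg (fun hh => hc (h.mpr hh))]
lemma eqInd_self {X : Type*} (t : X) : eqInd t t = 1 := by simp [eqInd]
lemma zmod2_add_self (x : ZMod 2) : x + x = 0 := by revert x; decide
lemma zmod2_cases (x : ZMod 2) : x = 0 ∨ x = 1 := by revert x; decide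

lemma eqInd_of_ne {X : Type*} {t r : X} (h : t ≠ r) : eqInd t r = 0 := by simp [eqInd, h]

noncomputable def listPar {X : Type*} (t : X) (l : List X) : ZMod 2 := (l.map (eqInd t)).sum
lemma listPar_nil {X : Type*} (t : X) : listPar t ([] : List X) = 0 := rfl
lemma listPar_cons {X : Type*} (t r : X) (l : List X) :
    listPar t (r :: l) = eqInd t r + listPar t l := by simp [listPar]
lemma listPar_append {X : Type*} (t : X) (l₁ l₂ : List X) :
    listPar t (l₁ ++ l₂) = listPar t l₁ + listPar t l₂ := by simp [listPar]
lemma mem_of_listPar_ne_zero {X : Type*} {t : X} {l : List X} (h : listPar t l ≠ 0) :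
    t ∈ l := by
  by_contra hm
  apply h
  apply List.sum_eq_zero
  intro x hx
  obtain ⟨r, hr, rfl⟩ := List.mem_map.mp hx
  exact eqInd_of_ne (fun he => hm (he ▸ hr))
variable (cs : CoxeterSystem M W)
noncomputable def flipFun (i : B) : W × ZMod 2 → W × ZMod 2 :=
  fun p => (cs.simple i * p.1 * cs.simple i, p.2 + eqInd p.1 (cs.simple i))
lemma simple_conj_eq_simple_iff (i : B) (t : W) :
    cs.simple i * t * cs.simple i = cs.simple i ↔ t = cs.simple i := by
  constructor
  · intro h
    have h' : cs.simple i * t = 1 := by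
      have := mul_right_cancel (b := cs.simple i) (a := cs.simple i * t) (c := 1)
        (by rw [one_mul]; exact h)
      exact this
    have := eq_inv_of_mul_eq_one_right h'
    rw [this, cs.inv_simple]
  · rintro rfl
    rw [cs.simple_mul_simple_self, one_mul]
lemma flipFun_involutive (i : B) : Function.Involutive (flipFun cs i) := by
  rintro ⟨t, e⟩
  simp only [flipFun]
  refine Prod.ext ?_ ?_
  · simp only
    simp only [← mul_assoc]
    rw [cs.simple_mul_simple_self, one_mul, cs.simple_mul_simple_cancel_right]
  · simp only
    rw [eqInd_iff (simple_conj_eq_simple_iff cs i t), add_assoc, zmod2_add_self, add_zero]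
noncomputable def refPerm (i : B) : Equiv.Perm (W × ZMod 2) :=
  (flipFun_involutive cs i).toPerm
lemma refPerm_apply (i : B) (p : W × ZMod 2) :
    refPerm cs i p = (cs.simple i * p.1 * cs.simple i, p.2 + eqInd p.1 (cs.simple i)) := rfl

-- key single-step computation
lemma refPerm_mul_apply (i j : B) (t : W) (e : ZMod 2) :
    (refPerm cs i * refPerm cs j) (t, e) =
      ((cs.simple i * cs.simple j) * t * (cs.simple i * cs.simple j)⁻¹,
        e + (eqInd t (cs.simple j * (cs.simple i * cs.simple j) ^ 0)
          + eqInd t (cs.simple j * (cs.simple i * cs.simple j) ^ 1))) := by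
  rw [Equiv.Perm.mul_apply, refPerm_apply, refPerm_apply]
  refine Prod.ext ?_ ?_
  · simp only [mul_inv_rev, cs.inv_simple]
    group
  · simp only [pow_zero, pow_one, mul_one]
    have hiff : (cs.simple j * t * cs.simple j = cs.simple i)
        ↔ t = cs.simple j * (cs.simple i * cs.simple j) := by
      constructor
      · intro h
        have : t = cs.simple j * cs.simple i * cs.simple j := by
          have := congrArg (fun z => cs.simple j * z * cs.simple j) h
          rw [← this]
          simp only [← mul_assoc]
          rw [cs.simple_mul_simple_self, one_mul, cs.simple_mul_simple_cancel_right]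
        rw [this, mul_assoc]
      · rintro rfl
        simp only [← mul_assoc]
        rw [cs.simple_mul_simple_self, one_mul, cs.simple_mul_simple_cancel_right]
    rw [eqInd_iff hiff, add_assoc]


lemma simple_conj_pow_iff (i j : B) (t : W) (l : ℕ) :
    ((cs.simple i * cs.simple j) * t * (cs.simple i * cs.simple j)⁻¹
      = cs.simple j * (cs.simple i * cs.simple j) ^ l)
    ↔ t = cs.simple j * (cs.simple i * cs.simple j) ^ (l + 2) := by
  have hval : (cs.simple i * cs.simple j)⁻¹ * (cs.simple j * (cs.simple i * cs.simple j) ^ l)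
      * (cs.simple i * cs.simple j)
      = cs.simple j * (cs.simple i * cs.simple j) ^ (l + 2) := by
    rw [mul_inv_rev, cs.inv_simple, cs.inv_simple]
    have h2 : (cs.simple i * cs.simple j) ^ (l + 2)
        = (cs.simple i * cs.simple j) * (cs.simple i * cs.simple j) ^ l
          * (cs.simple i * cs.simple j) := by
      rw [pow_succ, pow_succ']
    rw [h2]
    simp only [mul_assoc]
  constructor
  · intro h
    rw [← hval, ← h]
    group
  · rintro rfl
    rw [← hval]
    group

lemma refPerm_mul_pow_apply (i j : B) (k : ℕ) (t : W) (e : ZMod 2) :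
    ((refPerm cs i * refPerm cs j) ^ k) (t, e) =
      ((cs.simple i * cs.simple j) ^ k * t * ((cs.simple i * cs.simple j) ^ k)⁻¹,
        e + ∑ l ∈ Finset.range (k + k),
            eqInd t (cs.simple j * (cs.simple i * cs.simple j) ^ l)) := by
  induction k generalizing t e with
  | zero => simp
  | succ k ih =>
    have happ : ((refPerm cs i * refPerm cs j) ^ (k + 1)) (t, e)
        = ((refPerm cs i * refPerm cs j) ^ k) ((refPerm cs i * refPerm cs j) (t, e)) := by
      rw [pow_succ, Equiv.Perm.mul_apply]
    rw [happ, refPerm_mul_apply, ih]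
    refine Prod.ext ?_ ?_
    · simp only
      simp only [pow_succ, mul_inv_rev, mul_assoc]
    · simp only
      have hsum : ∑ l ∈ Finset.range (k + k),
          eqInd ((cs.simple i * cs.simple j) * t * (cs.simple i * cs.simple j)⁻¹)
            (cs.simple j * (cs.simple i * cs.simple j) ^ l)
          = ∑ l ∈ Finset.range (k + k),
            eqInd t (cs.simple j * (cs.simple i * cs.simple j) ^ (l + 2)) := by
        refine Finset.sum_congr rfl (fun l _ => ?_)
        exact eqInd_iff (simple_conj_pow_iff cs i j t l)
      rw [hsum]
      have hn : (k + 1) + (k + 1) = ((k + k) + 1) + 1 := by omega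
      rw [hn, Finset.sum_range_succ', Finset.sum_range_succ']
      simp only [pow_zero]
      ring

theorem refPerm_liftable : CoxeterMatrix.IsLiftable M (refPerm cs) := by
  intro i j
  rcases Nat.eq_zero_or_pos (M i j) with h0 | hpos
  · rw [h0, pow_zero]
  · apply Equiv.ext
    rintro ⟨t, e⟩
    rw [refPerm_mul_pow_apply]
    have hb : (cs.simple i * cs.simple j) ^ M i j = 1 := cs.simple_mul_simple_pow i j
    rw [hb]
    have hsum : ∑ l ∈ Finset.range (M i j + M i j),
        eqInd t (cs.simple j * (cs.simple i * cs.simple j) ^ l) = 0 := by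
      rw [Finset.sum_range_add]
      have hcong : ∀ l, eqInd t (cs.simple j * (cs.simple i * cs.simple j) ^ (M i j + l))
          = eqInd t (cs.simple j * (cs.simple i * cs.simple j) ^ l) := by
        intro l
        rw [pow_add, hb, one_mul]
      rw [Finset.sum_congr rfl (fun l _ => hcong l)]
      exact zmod2_add_self _
    rw [hsum, add_zero]
    simp

/-- The Tits reflection-parity representation `W →* Perm (W × ZMod 2)`. -/
noncomputable def refRep : W →* Equiv.Perm (W × ZMod 2) :=
  cs.lift ⟨refPerm cs, refPerm_liftable cs⟩

lemma refRep_simple (i : B) : refRep cs (cs.simple i) = refPerm cs i :=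
  cs.lift_apply_simple (refPerm_liftable cs) i

lemma refRep_wordProd (ω : List B) (t : W) (e : ZMod 2) :
    refRep cs (cs.wordProd ω) (t, e)
      = (cs.wordProd ω * t * (cs.wordProd ω)⁻¹, e + listPar t (cs.rightInvSeq ω)) := by
  induction ω with
  | nil => simp [listPar_nil]
  | cons i ω ih =>
    rw [cs.wordProd_cons, map_mul, Equiv.Perm.mul_apply, ih, refRep_simple, refPerm_apply]
    have hris : cs.rightInvSeq (i :: ω)
        = ((cs.wordProd ω)⁻¹ * cs.simple i * cs.wordProd ω) :: cs.rightInvSeq ω := rfl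
    rw [hris, listPar_cons]
    refine Prod.ext ?_ ?_
    · simp only
      simp only [mul_inv_rev, cs.inv_simple, mul_assoc]
    · simp only
      have hiff : (cs.wordProd ω * t * (cs.wordProd ω)⁻¹ = cs.simple i)
          ↔ t = (cs.wordProd ω)⁻¹ * cs.simple i * cs.wordProd ω := by
        constructor
        · intro h; rw [← h]; group
        · rintro rfl; group
      rw [eqInd_iff hiff]
      ring

/-- The parity cocycle. -/
noncomputable def rsgn (w t : W) : ZMod 2 := (refRep cs w (t, 0)).2

lemma rsgn_wordProd (ω : List B) (t : W) :
    rsgn cs (cs.wordProd ω) t = listPar t (cs.rightInvSeq ω) := by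
  rw [rsgn, refRep_wordProd]
  simp

lemma refRep_apply (w t : W) (e : ZMod 2) :
    refRep cs w (t, e) = (w * t * w⁻¹, e + rsgn cs w t) := by
  obtain ⟨ω, hω⟩ := cs.wordProd_surjective w
  subst hω
  rw [refRep_wordProd, rsgn_wordProd]

lemma refRep_reflection {t : W} (ht : cs.IsReflection t) (e : ZMod 2) :
    refRep cs t (t, e) = (t, e + 1) := by
  obtain ⟨v, i, rfl⟩ := ht
  have hinner : refRep cs v⁻¹ (v * cs.simple i * v⁻¹, e)
      = (cs.simple i, e + rsgn cs v⁻¹ (v * cs.simple i * v⁻¹)) := by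
    rw [refRep_apply]
    refine Prod.ext ?_ rfl
    simp only
    group
  have hcancel : rsgn cs v (cs.simple i) + rsgn cs v⁻¹ (v * cs.simple i * v⁻¹) = 0 := by
    have h2 : refRep cs v⁻¹ (refRep cs v (cs.simple i, 0)) = (cs.simple i, 0) := by
      rw [← Equiv.Perm.mul_apply, ← map_mul, inv_mul_cancel, map_one, Equiv.Perm.one_apply]
    rw [refRep_apply, refRep_apply] at h2
    have := congrArg Prod.snd h2
    simp only at this
    rw [zero_add] at this
    -- this : rsgn cs v (s i) + rsgn cs v⁻¹ (v * s i * v⁻¹) = 0  (up to assoc of add)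
    linear_combination this
  have hsplit : refRep cs (v * cs.simple i * v⁻¹) (v * cs.simple i * v⁻¹, e)
      = refRep cs v (refRep cs (cs.simple i) (refRep cs v⁻¹ (v * cs.simple i * v⁻¹, e))) := by
    rw [← Equiv.Perm.mul_apply, ← Equiv.Perm.mul_apply, ← map_mul, ← map_mul]
  rw [hsplit, hinner, refRep_simple, refPerm_apply]
  simp only [eqInd_self]
  rw [cs.simple_mul_simple_self, one_mul]
  rw [refRep_apply]
  refine Prod.ext ?_ ?_
  · simp only
  · simp only
    linear_combination hcancel

lemma length_lt_of_rsgn_one {w t : W} (h1 : rsgn cs w t = 1) :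
    cs.length (w * t) < cs.length w := by
  obtain ⟨ω, hred, hw⟩ := cs.exists_reduced_word' w
  have hmem : t ∈ cs.rightInvSeq ω := by
    apply mem_of_listPar_ne_zero
    rw [← rsgn_wordProd, ← hw, h1]
    exact one_ne_zero
  have := cs.isRightInversion_of_mem_rightInvSeq hred hmem
  rw [← hw] at this
  exact this.2

lemma rsgn_mul_reflection {t : W} (ht : cs.IsReflection t) (w : W) :
    rsgn cs (w * t) t = rsgn cs w t + 1 := by
  have : refRep cs (w * t) (t, 0) = refRep cs w (refRep cs t (t, 0)) := by
    rw [← Equiv.Perm.mul_apply, ← map_mul]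
  rw [rsgn, this, refRep_reflection cs ht, refRep_apply]
  simp only [zero_add]
  ring

lemma isRightInversion_iff_rsgn {t : W} (ht : cs.IsReflection t) (w : W) :
    cs.IsRightInversion w t ↔ rsgn cs w t = 1 := by
  constructor
  · intro hinv
    rcases zmod2_cases (rsgn cs w t) with h0 | h1
    · exfalso
      have h1' : rsgn cs (w * t) t = 1 := by rw [rsgn_mul_reflection cs ht, h0, zero_add]
      have := length_lt_of_rsgn_one cs h1'
      rw [mul_assoc, ht.mul_self, mul_one] at this
      exact lt_asymm hinv.2 this
    · exact h1
  · intro h1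
    exact ⟨ht, length_lt_of_rsgn_one cs h1⟩

lemma rightInvSeq_append (ω ψ : List B) :
    cs.rightInvSeq (ω ++ ψ)
      = (cs.rightInvSeq ω).map (fun r => (cs.wordProd ψ)⁻¹ * r * cs.wordProd ψ)
        ++ cs.rightInvSeq ψ := by
  induction ω with
  | nil => simp
  | cons i ω ih =>
    have h1 : cs.rightInvSeq ((i :: ω) ++ ψ)
        = ((cs.wordProd (ω ++ ψ))⁻¹ * cs.simple i * cs.wordProd (ω ++ ψ))
          :: cs.rightInvSeq (ω ++ ψ) := rfl
    have h2 : cs.rightInvSeq (i :: ω)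
        = ((cs.wordProd ω)⁻¹ * cs.simple i * cs.wordProd ω) :: cs.rightInvSeq ω := rfl
    rw [h1, h2, ih, List.map_cons, List.cons_append]
    congr 1
    rw [cs.wordProd_append]
    simp only [mul_inv_rev, mul_assoc]

lemma mem_rightInvSeq_of_isRightInversion {ω : List B} (_hred : cs.IsReduced ω) {t : W}
    (h : cs.IsRightInversion (cs.wordProd ω) t) : t ∈ cs.rightInvSeq ω := by
  apply mem_of_listPar_ne_zero
  rw [← rsgn_wordProd]
  rw [(isRightInversion_iff_rsgn cs h.1 _).mp h]
  exact one_ne_zero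


lemma wordProd_mem_parabolic {I : Set B} {ω : List B} (h : ∀ i ∈ ω, i ∈ I) :
    cs.wordProd ω ∈ StandardParabolic cs I := by
  induction ω with
  | nil => rw [cs.wordProd_nil]; exact one_mem _
  | cons i ω ih =>
    rw [cs.wordProd_cons]
    exact mul_mem (Subgroup.subset_closure ⟨i, h i (List.mem_cons_self), rfl⟩)
      (ih (fun j hj => h j (List.mem_cons_of_mem i hj)))

lemma exists_parabolic_word {I : Set B} {v : W} (hv : v ∈ StandardParabolic cs I) :
    ∃ ω : List B, (∀ i ∈ ω, i ∈ I) ∧ cs.wordProd ω = v := by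
  induction hv using Subgroup.closure_induction with
  | mem x hx =>
    obtain ⟨i, hi, rfl⟩ := hx
    exact ⟨[i], by simpa using hi, cs.wordProd_singleton i⟩
  | one => exact ⟨[], by simp, cs.wordProd_nil⟩
  | mul x y hx hy ihx ihy =>
    obtain ⟨ω₁, h₁, rfl⟩ := ihx
    obtain ⟨ω₂, h₂, rfl⟩ := ihy
    refine ⟨ω₁ ++ ω₂, ?_, cs.wordProd_append ω₁ ω₂⟩
    intro i hi
    rcases List.mem_append.mp hi with h | h
    · exact h₁ i h
    · exact h₂ i h
  | inv x hx ihx =>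
    obtain ⟨ω, h₁, rfl⟩ := ihx
    exact ⟨ω.reverse, fun i hi => h₁ i (List.mem_reverse.mp hi), cs.wordProd_reverse ω⟩

lemma rightInvSeq_subset_parabolic {I : Set B} {ω : List B} (h : ∀ i ∈ ω, i ∈ I) :
    ∀ r ∈ cs.rightInvSeq ω, r ∈ StandardParabolic cs I := by
  induction ω with
  | nil => intro r hr; simp at hr
  | cons i ω ih =>
    intro r hr
    have h2 : cs.rightInvSeq (i :: ω)
        = ((cs.wordProd ω)⁻¹ * cs.simple i * cs.wordProd ω) :: cs.rightInvSeq ω := rfl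
    rw [h2, List.mem_cons] at hr
    rcases hr with rfl | hr
    · have hω : cs.wordProd ω ∈ StandardParabolic cs I :=
        wordProd_mem_parabolic cs (fun j hj => h j (List.mem_cons_of_mem i hj))
      exact mul_mem (mul_mem (inv_mem hω)
        (Subgroup.subset_closure ⟨i, h i (List.mem_cons_self), rfl⟩)) hω
    · exact ih (fun j hj => h j (List.mem_cons_of_mem i hj)) r hr

lemma length_pow_le (w : W) (n : ℕ) : cs.length (w ^ n) ≤ n * cs.length w := by
  induction n with
  | zero => simp
  | succ n ih =>
    rw [pow_succ]
    calc cs.length (w ^ n * w) ≤ cs.length (w ^ n) + cs.length w := cs.length_mul_le _ _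
    _ ≤ n * cs.length w + cs.length w := by omega
    _ = (n + 1) * cs.length w := by ring

lemma conj_pow_eq (g w : W) (n : ℕ) : (g⁻¹ * w * g) ^ n = g⁻¹ * w ^ n * g := by
  induction n with
  | zero => simp
  | succ n ih =>
    rw [pow_succ, ih, pow_succ]
    group

lemma length_conj_pow_ge (g w : W) (n : ℕ) :
    cs.length (w ^ n) ≤ cs.length ((g⁻¹ * w * g) ^ n) + 2 * cs.length g := by
  rw [conj_pow_eq]
  have h1 : w ^ n = g * (g⁻¹ * w ^ n * g) * g⁻¹ := by group
  calc cs.length (w ^ n) = cs.length (g * (g⁻¹ * w ^ n * g) * g⁻¹) := by rw [← h1]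
  _ ≤ cs.length (g * (g⁻¹ * w ^ n * g)) + cs.length g⁻¹ := cs.length_mul_le _ _
  _ ≤ cs.length g + cs.length (g⁻¹ * w ^ n * g) + cs.length g⁻¹ := by
      have := cs.length_mul_le g (g⁻¹ * w ^ n * g); omega
  _ = cs.length (g⁻¹ * w ^ n * g) + 2 * cs.length g := by rw [cs.length_inv]; ring

lemma straight_isMinimalLength {w : W} (hw : IsStraight cs w) : IsMinimalLength cs w := by
  intro v
  by_contra hc
  push_neg at hc
  set N := 2 * cs.length v + 1 with hN
  have h1 : cs.length ((v⁻¹ * w * v) ^ N) ≤ N * cs.length (v⁻¹ * w * v) :=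
    length_pow_le cs _ N
  have h2 := length_conj_pow_ge cs v w N
  rw [hw N] at h2
  have h3 : N * cs.length (v⁻¹ * w * v) + N ≤ N * cs.length w := by
    have : cs.length (v⁻¹ * w * v) + 1 ≤ cs.length w := hc
    calc N * cs.length (v⁻¹ * w * v) + N = N * (cs.length (v⁻¹ * w * v) + 1) := by ring
    _ ≤ N * cs.length w := Nat.mul_le_mul_left N this
  omega

lemma straight_conj {w : W} (hw : IsStraight cs w) (g : W)
    (hlen : cs.length (g⁻¹ * w * g) = cs.length w) : IsStraight cs (g⁻¹ * w * g) := by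
  intro n
  have hle : cs.length ((g⁻¹ * w * g) ^ n) ≤ n * cs.length (g⁻¹ * w * g) :=
    length_pow_le cs _ n
  refine le_antisymm hle ?_
  by_contra hlt
  push_neg at hlt
  set K := 2 * cs.length g + 1 with hK
  have h1 : cs.length ((g⁻¹ * w * g) ^ (n * K)) ≤ K * cs.length ((g⁻¹ * w * g) ^ n) := by
    rw [pow_mul]
    exact length_pow_le cs _ K
  have h2 := length_conj_pow_ge cs g w (n * K)
  rw [hw (n * K)] at h2
  rw [hlen] at hlt
  -- hlt : cs.length ((g⁻¹ * w * g) ^ n) < n * cs.length w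
  have h3 : K * cs.length ((g⁻¹ * w * g) ^ n) + K ≤ K * (n * cs.length w) := by
    calc K * cs.length ((g⁻¹ * w * g) ^ n) + K
        = K * (cs.length ((g⁻¹ * w * g) ^ n) + 1) := by ring
    _ ≤ K * (n * cs.length w) := Nat.mul_le_mul_left K hlt
  have h4 : n * K * cs.length w = K * (n * cs.length w) := by ring
  omega

/-- Repeated word: `n` copies of `ω`. -/
def repWord (ω : List B) : ℕ → List B
  | 0 => []
  | n + 1 => ω ++ repWord ω n

lemma wordProd_repWord (ω : List B) (n : ℕ) :
    cs.wordProd (repWord ω n) = (cs.wordProd ω) ^ n := by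
  induction n with
  | zero => simp [repWord]
  | succ n ih => rw [repWord, cs.wordProd_append, ih, pow_succ']

lemma length_repWord (ω : List B) (n : ℕ) : (repWord ω n).length = n * ω.length := by
  induction n with
  | zero => simp [repWord]
  | succ n ih => rw [repWord, List.length_append, ih]; ring

lemma conj_mem_rightInvSeq_repWord {ω : List B} {t : W} (ht : t ∈ cs.rightInvSeq ω)
    {k n : ℕ} (hk : k < n) :
    ((cs.wordProd ω) ^ k)⁻¹ * t * (cs.wordProd ω) ^ k ∈ cs.rightInvSeq (repWord ω n) := by
  induction n with
  | zero => omega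
  | succ n ih =>
    rw [repWord, rightInvSeq_append, List.mem_append]
    rcases Nat.lt_or_ge k n with h | h
    · right; exact ih h
    · have hkn : k = n := by omega
      subst hkn
      left
      rw [wordProd_repWord]
      exact List.mem_map.mpr ⟨t, ht, rfl⟩

/-- Key lemma: a straight element normalising a finite standard parabolic has no
right inversion inside that parabolic. -/
theorem not_isRightInversion_of_straight {I : Set B} (hI : IsSpherical cs I) {x : W}
    (hx : IsStraight cs x) (hxn : x ∈ Subgroup.normalizer (StandardParabolic cs I : Set W))
    {t : W} (htP : t ∈ StandardParabolic cs I) : ¬ cs.IsRightInversion x t := by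
  intro hinv
  -- conjugates of t by powers of x stay in the parabolic
  have hstep : ∀ r, r ∈ StandardParabolic cs I → x⁻¹ * r * x ∈ StandardParabolic cs I := by
    intro r hr
    have hiff := Subgroup.mem_normalizer_iff.mp hxn (x⁻¹ * r * x)
    apply hiff.mpr
    have : x * (x⁻¹ * r * x) * x⁻¹ = r := by group
    rw [this]
    exact hr
  have hiter : ∀ k : ℕ, (x ^ k)⁻¹ * t * x ^ k ∈ StandardParabolic cs I := by
    intro k
    induction k with
    | zero => simpa using htP
    | succ k ih =>
      have he : (x ^ (k+1))⁻¹ * t * x ^ (k+1) = x⁻¹ * ((x ^ k)⁻¹ * t * x ^ k) * x := by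
        rw [pow_succ]; group
      rw [he]
      exact hstep _ ih
  -- pigeonhole: two equal conjugates
  haveI : Finite (StandardParabolic cs I : Set W) := hI.to_subtype
  obtain ⟨k, l, hkl, heq⟩ := Finite.exists_ne_map_eq_of_infinite
    (fun k : ℕ => (⟨(x ^ k)⁻¹ * t * x ^ k, hiter k⟩ : (StandardParabolic cs I : Set W)))
  have heq' : (x ^ k)⁻¹ * t * x ^ k = (x ^ l)⁻¹ * t * x ^ l := congrArg Subtype.val heq
  have key : ∀ p q : ℕ, p < q → (x ^ p)⁻¹ * t * x ^ p = (x ^ q)⁻¹ * t * x ^ q → False := by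
    intro p q hpq he
    obtain ⟨ω, hred, hπ⟩ := cs.exists_reduced_word' x
    have hΩred : cs.IsReduced (repWord ω (q + 1)) := by
      unfold CoxeterSystem.IsReduced
      rw [wordProd_repWord, ← hπ, hx (q + 1), length_repWord, hπ, hred]
    have htmem : t ∈ cs.rightInvSeq ω := by
      apply mem_rightInvSeq_of_isRightInversion cs hred
      rw [← hπ]
      exact hinv
    have hnodup := hΩred.nodup_rightInvSeq
    rw [show repWord ω (q+1) = ω ++ repWord ω q from rfl, rightInvSeq_append] at hnodup
    have hdisj := (List.nodup_append.mp hnodup).2.2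
    apply hdisj ((x ^ q)⁻¹ * t * x ^ q) ?_ ((x ^ q)⁻¹ * t * x ^ q) ?_ rfl
    · rw [wordProd_repWord, ← hπ]
      exact List.mem_map.mpr ⟨t, htmem, rfl⟩
    · rw [← he, hπ]
      exact conj_mem_rightInvSeq_repWord cs htmem hpq
  rcases Nat.lt_or_ge k l with hlt | hge
  · exact key k l hlt heq'
  · exact key l k (by omega) heq'.symm

/-- If `x` and `x * d` are straight and both normalise the finite standard parabolic `W_I`,
and `d ∈ W_I`, then `d = 1`. -/
theorem parab_factor_eq_one {I : Set B} (hI : IsSpherical cs I) {x d : W}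
    (hx : IsStraight cs x) (hxn : x ∈ Subgroup.normalizer (StandardParabolic cs I : Set W))
    (hd : d ∈ StandardParabolic cs I)
    (hy : IsStraight cs (x * d)) (hyn : x * d ∈ Subgroup.normalizer (StandardParabolic cs I : Set W)) :
    d = 1 := by
  by_contra hd1
  obtain ⟨j, hj⟩ := cs.exists_rightDescent_of_ne_one hd1
  have htref : cs.IsReflection (cs.simple j) := cs.isReflection_simple j
  have hrd : rsgn cs d (cs.simple j) = 1 :=
    (isRightInversion_iff_rsgn cs htref d).mp ⟨htref, hj⟩
  obtain ⟨α, hαI, hαπ⟩ := exists_parabolic_word cs hd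
  have htmem : cs.simple j ∈ cs.rightInvSeq α := by
    apply mem_of_listPar_ne_zero
    rw [← rsgn_wordProd, hαπ, hrd]
    exact one_ne_zero
  have htP : cs.simple j ∈ StandardParabolic cs I :=
    rightInvSeq_subset_parabolic cs hαI _ htmem
  obtain ⟨ω, hωred, hωπ⟩ := cs.exists_reduced_word' x
  have hzero : listPar (cs.simple j)
      ((cs.rightInvSeq ω).map (fun r => (cs.wordProd α)⁻¹ * r * cs.wordProd α)) = 0 := by
    apply List.sum_eq_zero
    intro z hz
    obtain ⟨z', hz', rfl⟩ := List.mem_map.mp hz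
    obtain ⟨r, hr, rfl⟩ := List.mem_map.mp hz'
    apply eqInd_of_ne
    intro he
    have hrP : r ∈ StandardParabolic cs I := by
      have hre : r = (cs.wordProd α) * cs.simple j * (cs.wordProd α)⁻¹ := by
        rw [he]; group
      rw [hre, hαπ]
      exact mul_mem (mul_mem hd htP) (inv_mem hd)
    have hrinv : cs.IsRightInversion x r := by
      rw [hωπ]
      exact cs.isRightInversion_of_mem_rightInvSeq hωred hr
    exact not_isRightInversion_of_straight cs hI hx hxn hrP hrinv
  have hy1 : rsgn cs (x * d) (cs.simple j) = 1 := by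
    have hxd : x * d = cs.wordProd (ω ++ α) := by
      rw [cs.wordProd_append, ← hωπ, hαπ]
    rw [hxd, rsgn_wordProd, rightInvSeq_append, listPar_append]
    have h2 : listPar (cs.simple j) (cs.rightInvSeq α) = 1 := by
      rw [← rsgn_wordProd, hαπ, hrd]
    rw [h2]
    have h1 : listPar (cs.simple j)
        ((cs.rightInvSeq ω).map (fun r => (cs.wordProd α)⁻¹ * r * cs.wordProd α)) = 0 := hzero
    rw [h1, zero_add]
  have hyinv : cs.IsRightInversion (x * d) (cs.simple j) :=
    (isRightInversion_iff_rsgn cs htref _).mpr hy1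
  exact not_isRightInversion_of_straight cs hI hy hyn htP hyinv


end AuxStraight

/-- For straight `w` and a spherical subset `I` with `u⁻¹wu` normalising `W_I`, any two
minimal-length conjugates of `w` by elements of the coset `uW_I` coincide. -/
theorem straight_min_conjugates_eq (cs : CoxeterSystem M W) (w u : W) (I : Set B)
    (hw : IsStraight cs w) (hI : IsSpherical cs I)
    (hnorm : u⁻¹ * w * u ∈ Subgroup.normalizer (StandardParabolic cs I : Set W))
    (a b : W) (ha : a ∈ StandardParabolic cs I) (hb : b ∈ StandardParabolic cs I)
    (hamin : IsMinimalLength cs ((u * a)⁻¹ * w * (u * a)))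
    (hbmin : IsMinimalLength cs ((u * b)⁻¹ * w * (u * b))) :
    (u * a)⁻¹ * w * (u * a) = (u * b)⁻¹ * w * (u * b) := by
  set P := StandardParabolic cs I with hP
  have hwmin : IsMinimalLength cs w := straight_isMinimalLength cs hw
  -- lengths of the two conjugates equal ℓ w
  have hlen : ∀ g : W, IsMinimalLength cs (g⁻¹ * w * g) →
      cs.length (g⁻¹ * w * g) = cs.length w := by
    intro g hmin
    refine le_antisymm ?_ (hwmin g)
    have := hmin g⁻¹
    have he : g⁻¹⁻¹ * (g⁻¹ * w * g) * g⁻¹ = w := by group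
    rwa [he] at this
  have hxlen : cs.length ((u * a)⁻¹ * w * (u * a)) = cs.length w := hlen (u * a) hamin
  have hylen : cs.length ((u * b)⁻¹ * w * (u * b)) = cs.length w := hlen (u * b) hbmin
  set x := (u * a)⁻¹ * w * (u * a) with hxdef
  set y := (u * b)⁻¹ * w * (u * b) with hydef
  have hxstraight : IsStraight cs x := straight_conj cs hw (u * a) hxlen
  have hystraight : IsStraight cs y := straight_conj cs hw (u * b) hylen
  -- normalizer membership
  have haN : a ∈ Subgroup.normalizer (P : Set W) := Subgroup.le_normalizer ha
  have hbN : b ∈ Subgroup.normalizer (P : Set W) := Subgroup.le_normalizer hb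
  have hxa : x = a⁻¹ * (u⁻¹ * w * u) * a := by rw [hxdef]; group
  have hyb : y = b⁻¹ * (u⁻¹ * w * u) * b := by rw [hydef]; group
  have hxn : x ∈ Subgroup.normalizer (P : Set W) := by
    rw [hxa]
    exact mul_mem (mul_mem (inv_mem haN) hnorm) haN
  have hyn : y ∈ Subgroup.normalizer (P : Set W) := by
    rw [hyb]
    exact mul_mem (mul_mem (inv_mem hbN) hnorm) hbN
  -- d := x⁻¹ * y lies in P
  set d := x⁻¹ * y with hddef
  have hdc : d = (x⁻¹ * (a⁻¹ * b)⁻¹ * x) * (a⁻¹ * b) := by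
    rw [hddef, hxa, hyb]
    group
  have hcP : a⁻¹ * b ∈ P := mul_mem (inv_mem ha) hb
  have hd : d ∈ P := by
    rw [hdc]
    refine mul_mem ?_ hcP
    have hiff := Subgroup.mem_normalizer_iff.mp hxn (x⁻¹ * (a⁻¹ * b)⁻¹ * x)
    apply hiff.mpr
    have he : x * (x⁻¹ * (a⁻¹ * b)⁻¹ * x) * x⁻¹ = (a⁻¹ * b)⁻¹ := by group
    rw [he]
    exact inv_mem hcP
  have hxd : x * d = y := by rw [hddef]; group
  have hd1 : d = 1 := by
    apply parab_factor_eq_one cs hI hxstraight hxn hd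
    · rw [hxd]; exact hystraight
    · rw [hxd]; exact hyn
  have : x * d = x := by rw [hd1, mul_one]
  rw [← hxd, this]
end

section
/- Let (W,S) be a Coxeter system and let I ⊆ S. Define N_I := {n ∈ N_W(W_I) : ℓ(ns) > ℓ(n) for all s ∈ I}. Then N_I is a subgroup of W, the normaliser N_W(W_I) is the internal semidirect product of W_I and N_I (i.e. N_W(W_I) = W_I·N_I and W_I ∩ N_I = {1}, with W_I normal in N_W(W_I)), and moreover ℓ(w_I·n_I) = ℓ(w_I) + ℓ(n_I) for all w_I ∈ W_I and n_I ∈ N_I. -/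
open CoxeterSystem

variable {B W : Type*} [Group W] {M : CoxeterMatrix B}

namespace NSD
open CoxeterSystem List
open scoped Classical
variable {B W : Type*} [Group W] {M : CoxeterMatrix B} (cs : CoxeterSystem M W)

/-- The basic involution on `W × ZMod 2`. -/
noncomputable def phiFun (i : B) : W × ZMod 2 → W × ZMod 2 :=
  fun p => (cs.simple i * p.1 * cs.simple i,
    p.2 + if p.1 = cs.simple i then 1 else 0)

lemma simple_conj_cancel (i : B) (w : W) :
    cs.simple i * (cs.simple i * w * cs.simple i) * cs.simple i = w := by
  have h := cs.simple_mul_simple_self i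
  calc cs.simple i * (cs.simple i * w * cs.simple i) * cs.simple i
      = (cs.simple i * cs.simple i) * w * (cs.simple i * cs.simple i) := by group
    _ = w := by rw [h]; group

lemma simple_conj_eq_iff (i : B) (w : W) :
    (cs.simple i * w * cs.simple i = cs.simple i) ↔ w = cs.simple i := by
  constructor
  · intro h
    have h2 : cs.simple i * (cs.simple i * w * cs.simple i) * cs.simple i
        = cs.simple i * cs.simple i * cs.simple i := by rw [h]
    rw [simple_conj_cancel] at h2
    rw [h2, cs.simple_mul_simple_self, one_mul]
  · intro h; rw [h, cs.simple_mul_simple_self, one_mul]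

lemma zmod2_add_self (a : ZMod 2) : a + a = 0 := by revert a; decide

lemma zmod2_cases (a : ZMod 2) : a = 0 ∨ a = 1 := by revert a; decide

lemma phiFun_invol (i : B) : Function.Involutive (phiFun cs i) := by
  intro p
  simp only [phiFun, simple_conj_cancel, simple_conj_eq_iff]
  ext
  · rfl
  · simp only
    by_cases h : p.1 = cs.simple i <;> simp [h, add_assoc, zmod2_add_self]

/-- The permutation of `W × ZMod 2` associated to a simple generator. -/
noncomputable def phi (i : B) : Equiv.Perm (W × ZMod 2) :=
  Function.Involutive.toPerm _ (phiFun_invol cs i)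

lemma phi_apply (i : B) (p : W × ZMod 2) :
    phi cs i p = (cs.simple i * p.1 * cs.simple i,
      p.2 + if p.1 = cs.simple i then 1 else 0) := rfl


lemma sandwich_eq_iff {x z : W} (y w : W) : x * y * z = w ↔ y = x⁻¹ * w * z⁻¹ := by
  constructor
  · intro h; rw [← h]; group
  · intro h; rw [h]; group

section abstractGroup
omit cs
variable {a b : W} (ha : a * a = 1) (hb : b * b = 1)
include ha hb

lemma alt_conj (m : ℕ) : (b * a) ^ m * b = b * (a * b) ^ m := by
  induction m with
  | zero => simp
  | succ m ih => rw [pow_succ', mul_assoc, ih, pow_succ']; simp [mul_assoc]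

lemma alt_inv_pow (n : ℕ) : ((a * b) ^ n)⁻¹ = (b * a) ^ n := by
  have ha' : a⁻¹ = a := by rw [← mul_one a⁻¹, ← ha, inv_mul_cancel_left]
  have hb' : b⁻¹ = b := by rw [← mul_one b⁻¹, ← hb, inv_mul_cancel_left]
  rw [← inv_pow, mul_inv_rev, ha', hb']

lemma alt_E1 (n : ℕ) :
    ((a * b) ^ n)⁻¹ * b * (a * b) ^ n = b * (a * b) ^ (2 * n) := by
  rw [alt_inv_pow ha hb, alt_conj ha hb, mul_assoc, ← pow_add, ← two_mul]

lemma alt_E2 (n : ℕ) :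
    ((a * b) ^ n)⁻¹ * (b * a * b) * (a * b) ^ n = b * (a * b) ^ (2 * n + 1) := by
  have comm : ((a * b) ^ n)⁻¹ * (a * b) * (a * b) ^ n = a * b := by
    rw [mul_assoc, ← pow_succ', pow_succ, ← mul_assoc, inv_mul_cancel, one_mul]
  have split : ((a * b) ^ n)⁻¹ * (b * a * b) * (a * b) ^ n
      = (((a * b) ^ n)⁻¹ * b * (a * b) ^ n) * (((a * b) ^ n)⁻¹ * (a * b) * (a * b) ^ n) := by
    group
  rw [split, alt_E1 ha hb, comm, mul_assoc, ← pow_succ]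

end abstractGroup


lemma phi_pow (i j : B) (n : ℕ) (t : W) (ε : ZMod 2) :
    ((phi cs i * phi cs j) ^ n) (t, ε) =
      ((cs.simple i * cs.simple j) ^ n * t * ((cs.simple i * cs.simple j) ^ n)⁻¹,
        ε + ∑ k ∈ Finset.range (2 * n),
          (if t = cs.simple j * (cs.simple i * cs.simple j) ^ k then 1 else 0)) := by
  have ha : cs.simple i * cs.simple i = 1 := cs.simple_mul_simple_self i
  have hb : cs.simple j * cs.simple j = 1 := cs.simple_mul_simple_self j
  induction n with
  | zero => simp
  | succ n ih =>
    rw [pow_succ', Equiv.Perm.mul_apply, ih, Equiv.Perm.mul_apply, phi_apply, phi_apply]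
    have cond1 : ((cs.simple i * cs.simple j) ^ n * t * ((cs.simple i * cs.simple j) ^ n)⁻¹
        = cs.simple j) ↔ t = cs.simple j * (cs.simple i * cs.simple j) ^ (2 * n) := by
      rw [sandwich_eq_iff, inv_inv, alt_E1 ha hb]
    have cond2 : (cs.simple j * ((cs.simple i * cs.simple j) ^ n * t *
          ((cs.simple i * cs.simple j) ^ n)⁻¹) * cs.simple j = cs.simple i)
        ↔ t = cs.simple j * (cs.simple i * cs.simple j) ^ (2 * n + 1) := by
      have hb' : (cs.simple j)⁻¹ = cs.simple j := cs.inv_simple j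
      rw [sandwich_eq_iff, hb', ← alt_E2 ha hb, sandwich_eq_iff, inv_inv]
    refine Prod.ext ?_ ?_
    · show cs.simple i * (cs.simple j * _ * cs.simple j) * cs.simple i = _
      rw [pow_succ' (cs.simple i * cs.simple j) n, mul_inv_rev (cs.simple i * cs.simple j),
        mul_inv_rev, cs.inv_simple, cs.inv_simple]
      simp [mul_assoc]
    · show ε + _ + _ + _ = ε + _
      rw [show 2 * (n + 1) = (2 * n + 1) + 1 from by omega, Finset.sum_range_succ,
        Finset.sum_range_succ]
      simp only [cond1, cond2]
      simp [add_assoc]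

lemma phi_liftable : M.IsLiftable (phi cs) := by
  intro i j
  ext ⟨t, ε⟩
  · rw [Equiv.Perm.one_apply, phi_pow, cs.simple_mul_simple_pow i j]
    simp
  · rw [Equiv.Perm.one_apply, phi_pow]
    simp only
    have hper : ∀ k : ℕ,
        cs.simple j * (cs.simple i * cs.simple j) ^ (k + M i j)
          = cs.simple j * (cs.simple i * cs.simple j) ^ k := by
      intro k
      rw [pow_add, cs.simple_mul_simple_pow i j, mul_one]
    have : ∑ k ∈ Finset.range (2 * M i j),
        (if t = cs.simple j * (cs.simple i * cs.simple j) ^ k then (1 : ZMod 2) else 0) = 0 := by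
      rw [two_mul, ← Finset.sum_range_add_sum_Ico _ (Nat.le_add_right (M i j) (M i j)),
        Finset.sum_Ico_eq_sum_range]
      simp only [Nat.add_sub_cancel_left, add_comm (M i j)]
      rw [← Finset.sum_add_distrib]
      refine Finset.sum_eq_zero fun k _ => ?_
      rw [hper k]
      exact zmod2_add_self _
    rw [this, add_zero]

/-- The sign homomorphism into permutations of `W × ZMod 2`. -/
noncomputable def Phi : W →* Equiv.Perm (W × ZMod 2) :=
  cs.lift ⟨phi cs, phi_liftable cs⟩

lemma Phi_simple (i : B) : Phi cs (cs.simple i) = phi cs i :=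
  cs.lift_apply_simple (phi_liftable cs) i

/-- The inversion-parity function. `eta cs w t = 1` iff `t` is a "right inversion
counted with multiplicity parity" of `w`. -/
noncomputable def eta (w t : W) : ZMod 2 := ((Phi cs w) (t, 0)).2

lemma Phi_apply (w t : W) (ε : ZMod 2) :
    Phi cs w (t, ε) = (w * t * w⁻¹, ε + eta cs w t) := by
  revert ε
  induction w using cs.simple_induction_left with
  | one => intro ε; simp [eta, map_one]
  | mul_simple_left w i ih =>
    intro ε
    have h2 : eta cs (cs.simple i * w) t
        = eta cs w t + (if w * t * w⁻¹ = cs.simple i then 1 else 0) := by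
      unfold eta
      rw [map_mul, Equiv.Perm.mul_apply, Phi_simple, ih 0, phi_apply]
    rw [map_mul, Equiv.Perm.mul_apply, Phi_simple, ih ε, phi_apply, h2]
    refine Prod.ext ?_ ?_
    · show cs.simple i * (w * t * w⁻¹) * cs.simple i = _
      rw [mul_inv_rev, cs.inv_simple]
      simp [mul_assoc]
    · show ε + eta cs w t + _ = ε + _
      rw [add_assoc]

lemma eta_one (t : W) : eta cs 1 t = 0 := by simp [eta, map_one]

lemma eta_simple (i : B) (t : W) :
    eta cs (cs.simple i) t = if t = cs.simple i then 1 else 0 := by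
  simp [eta, Phi_simple, phi_apply]

lemma eta_mul (u v t : W) : eta cs (u * v) t = eta cs v t + eta cs u (v * t * v⁻¹) := by
  have : Phi cs (u * v) (t, 0) = Phi cs u (Phi cs v (t, 0)) := by
    rw [map_mul, Equiv.Perm.mul_apply]
  have h2 : (Phi cs (u * v) (t, 0)).2 = eta cs (u * v) t := rfl
  rw [eta, this, Phi_apply cs v t 0, Phi_apply cs u (v * t * v⁻¹) (0 + eta cs v t), zero_add]

lemma eta_inv_conj (u t : W) : eta cs u⁻¹ (u * t * u⁻¹) = eta cs u t := by
  have h := eta_mul cs u⁻¹ u t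
  rw [inv_mul_cancel, eta_one] at h
  rcases zmod2_cases (eta cs u t) with h1 | h1 <;>
    rcases zmod2_cases (eta cs u⁻¹ (u * t * u⁻¹)) with h2 | h2 <;>
    rw [h1, h2] <;> rw [h1, h2] at h <;> first | rfl | simp at h

lemma eta_reflection_self {t : W} (ht : cs.IsReflection t) : eta cs t t = 1 := by
  obtain ⟨u, i, rfl⟩ := ht
  set t := u * cs.simple i * u⁻¹ with htdef
  have e1 : t = u * (cs.simple i * u⁻¹) := by rw [htdef, mul_assoc]
  have key : eta cs t t = eta cs (cs.simple i * u⁻¹) t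
      + eta cs u ((cs.simple i * u⁻¹) * t * (cs.simple i * u⁻¹)⁻¹) := by
    nth_rewrite 1 [e1]
    exact eta_mul cs u (cs.simple i * u⁻¹) t
  have c1 : (cs.simple i * u⁻¹) * t * (cs.simple i * u⁻¹)⁻¹ = cs.simple i := by
    rw [htdef, mul_inv_rev, inv_inv, cs.inv_simple]
    have hss := cs.simple_mul_simple_self i
    calc cs.simple i * u⁻¹ * (u * cs.simple i * u⁻¹) * (u * cs.simple i)
        = cs.simple i * (cs.simple i * cs.simple i) := by group
      _ = cs.simple i := by rw [hss, mul_one]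
  have c2 : eta cs (cs.simple i * u⁻¹) t = eta cs u⁻¹ t + 1 := by
    have := eta_mul cs (cs.simple i) u⁻¹ t
    rw [this]
    have : u⁻¹ * t * u⁻¹⁻¹ = cs.simple i := by rw [htdef, inv_inv]; group
    rw [this, eta_simple, if_pos rfl, add_comm]
  have c3 : eta cs u⁻¹ t = eta cs u (cs.simple i) := by
    rw [htdef]; exact eta_inv_conj cs u (cs.simple i)
  rw [key, c1, c2, c3, add_comm (eta cs u (cs.simple i)) 1, add_assoc, zmod2_add_self, add_zero]

lemma mem_ris_of_eta_eq_one {ω : List B} {t : W} (h : eta cs (cs.wordProd ω) t = 1) :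
    t ∈ cs.rightInvSeq ω := by
  induction ω with
  | nil =>
    rw [cs.wordProd_nil, eta_one] at h
    exact absurd h (by decide)
  | cons i ω ih =>
    rw [cs.wordProd_cons, eta_mul] at h
    rcases zmod2_cases (eta cs (cs.wordProd ω) t) with h1 | h1
    · rw [h1, zero_add, eta_simple] at h
      have : cs.wordProd ω * t * (cs.wordProd ω)⁻¹ = cs.simple i := by
        by_contra hne
        rw [if_neg hne] at h
        exact absurd h (by decide)
      have ht : t = (cs.wordProd ω)⁻¹ * cs.simple i * cs.wordProd ω := by
        rw [← this]; group
      rw [rightInvSeq]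
      exact ht ▸ List.mem_cons_self
    · rw [rightInvSeq]
      exact List.mem_cons_of_mem _ (ih h1)

lemma eta_eq_one_iff {w t : W} (ht : cs.IsReflection t) :
    eta cs w t = 1 ↔ cs.length (w * t) < cs.length w := by
  constructor
  · intro h
    obtain ⟨ω, hred, hw⟩ := cs.exists_reduced_word' w
    have hmem : t ∈ cs.rightInvSeq ω := mem_ris_of_eta_eq_one cs (by rwa [← hw])
    have := cs.isRightInversion_of_mem_rightInvSeq hred hmem
    rw [hw]
    exact this.2
  · intro h
    have hwt : w = (w * t) * t := by rw [mul_assoc, ht.mul_self, mul_one]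
    have hsplit : eta cs w t = eta cs t t + eta cs (w * t) (t * t * t⁻¹) := by
      nth_rewrite 1 [hwt]; exact eta_mul cs (w * t) t t
    have htt : t * t * t⁻¹ = t := by rw [ht.mul_self, one_mul, ht.inv]
    rw [htt, eta_reflection_self cs ht] at hsplit
    have hz : eta cs (w * t) t = 0 := by
      rcases zmod2_cases (eta cs (w * t) t) with h1 | h1
      · exact h1
      · exfalso
        obtain ⟨ω, hred, hw⟩ := cs.exists_reduced_word' (w * t)
        have hmem : t ∈ cs.rightInvSeq ω := mem_ris_of_eta_eq_one cs (by rwa [← hw])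
        have hlt := (cs.isRightInversion_of_mem_rightInvSeq hred hmem).2
        rw [← hw, mul_assoc, ht.mul_self, mul_one] at hlt
        omega
    rw [hz, add_zero] at hsplit
    exact hsplit

lemma eta_eq_zero_iff {w t : W} (ht : cs.IsReflection t) :
    eta cs w t = 0 ↔ cs.length w < cs.length (w * t) := by
  have hne := ht.length_mul_left_ne w
  constructor
  · intro h0
    have hnlt : ¬ cs.length (w * t) < cs.length w := by
      intro hlt
      have := (eta_eq_one_iff cs ht).mpr hlt
      rw [h0] at this
      exact absurd this (by decide)
    omega
  · intro hgt
    rcases zmod2_cases (eta cs w t) with h1 | h1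
    · exact h1
    · have := (eta_eq_one_iff cs ht).mp h1
      omega

lemma eta_eq_one_iff_left {w t : W} (ht : cs.IsReflection t) :
    eta cs w⁻¹ t = 1 ↔ cs.length (t * w) < cs.length w := by
  rw [eta_eq_one_iff cs ht]
  have h1 : cs.length (w⁻¹ * t) = cs.length (t * w) := by
    rw [← cs.length_inv (w⁻¹ * t), mul_inv_rev, inv_inv, ht.inv]
  rw [h1, cs.length_inv]

/-- Strong exchange, left version. -/
lemma strong_exchange_left {ω : List B} {t : W} (ht : cs.IsReflection t) (hlt : cs.length (t * cs.wordProd ω) < cs.length (cs.wordProd ω)) :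
    ∃ j, j < ω.length ∧ t * cs.wordProd ω = cs.wordProd (ω.eraseIdx j) := by
  have h1 : eta cs (cs.wordProd ω)⁻¹ t = 1 := (eta_eq_one_iff_left cs ht).mpr hlt
  rw [← cs.wordProd_reverse] at h1
  have hmem : t ∈ cs.rightInvSeq ω.reverse := mem_ris_of_eta_eq_one cs h1
  rw [cs.rightInvSeq_reverse, List.mem_reverse] at hmem
  obtain ⟨j, hj, hjt⟩ := List.mem_iff_getElem.mp hmem
  rw [cs.length_leftInvSeq] at hj
  refine ⟨j, hj, ?_⟩
  rw [← cs.getD_leftInvSeq_mul_wordProd ω j]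
  rw [List.getD_eq_getElem _ _ (by rw [cs.length_leftInvSeq]; exact hj), hjt]


variable (I : Set B)

lemma mem_P_of_word {ω : List B} (h : ∀ i ∈ ω, i ∈ I) :
    cs.wordProd ω ∈ StandardParabolic cs I := by
  induction ω with
  | nil => rw [cs.wordProd_nil]; exact one_mem _
  | cons i ω ih =>
    rw [cs.wordProd_cons]
    exact mul_mem (Subgroup.subset_closure ⟨i, h i (List.mem_cons_self), rfl⟩)
      (ih fun j hj => h j (List.mem_cons_of_mem _ hj))

lemma exists_word_P {u : W} (hu : u ∈ StandardParabolic cs I) :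
    ∃ ω : List B, (∀ i ∈ ω, i ∈ I) ∧ cs.wordProd ω = u := by
  induction hu using Subgroup.closure_induction with
  | mem x hx =>
    obtain ⟨i, hi, rfl⟩ := hx
    exact ⟨[i], by simpa using hi, cs.wordProd_singleton i⟩
  | one => exact ⟨[], by simp, cs.wordProd_nil⟩
  | mul x y _ _ hx hy =>
    obtain ⟨ω, hω, rfl⟩ := hx
    obtain ⟨ω', hω', rfl⟩ := hy
    exact ⟨ω ++ ω', by
      intro i hi
      rcases List.mem_append.mp hi with h | h
      exacts [hω i h, hω' i h], cs.wordProd_append ω ω'⟩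
  | inv x _ hx =>
    obtain ⟨ω, hω, rfl⟩ := hx
    exact ⟨ω.reverse, fun i hi => hω i (List.mem_reverse.mp hi), cs.wordProd_reverse ω⟩

lemma word_reduce : ∀ n (ω : List B), ω.length ≤ n → (∀ i ∈ ω, i ∈ I) →
    ∃ ω' : List B, (∀ i ∈ ω', i ∈ I) ∧ cs.IsReduced ω' ∧ cs.wordProd ω' = cs.wordProd ω := by
  intro n
  induction n with
  | zero =>
    intro ω hlen _
    have : ω = [] := List.eq_nil_of_length_eq_zero (Nat.le_zero.mp hlen)
    subst this
    exact ⟨[], by simp, by simp [CoxeterSystem.IsReduced], rfl⟩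
  | succ n ih =>
    intro ω hlen hmem
    match ω with
    | [] => exact ⟨[], by simp, by simp [CoxeterSystem.IsReduced], rfl⟩
    | i :: ω'' =>
      obtain ⟨ω''', h1, h2, h3⟩ := ih ω'' (by simpa using Nat.succ_le_succ_iff.mp hlen)
        (fun j hj => hmem j (List.mem_cons_of_mem _ hj))
      by_cases hr : cs.IsReduced (i :: ω''')
      · refine ⟨i :: ω''', ?_, hr, ?_⟩
        · intro j hj
          rcases List.mem_cons.mp hj with h | h
          · exact h ▸ hmem i (List.mem_cons_self)
          · exact h1 j h
        · rw [cs.wordProd_cons, cs.wordProd_cons, h3]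
      · have hdesc : cs.length (cs.simple i * cs.wordProd ω''')
            < cs.length (cs.wordProd ω''') := by
          rcases cs.length_simple_mul (cs.wordProd ω''') i with h | h
          · exfalso
            apply hr
            unfold CoxeterSystem.IsReduced
            rw [cs.wordProd_cons, h, h2, List.length_cons]
          · have hne := cs.length_simple_mul_ne (cs.wordProd ω''') i
            omega
        obtain ⟨j, hj, hjw⟩ := strong_exchange_left cs (cs.isReflection_simple i) hdesc
        obtain ⟨χ, hχ1, hχ2, hχ3⟩ := ih (ω'''.eraseIdx j)
          (by
            have := List.length_eraseIdx_add_one hj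
            have h4 : ω'''.length = cs.length (cs.wordProd ω''') := h2.symm
            have h5 : cs.length (cs.wordProd ω''') = cs.length (cs.wordProd ω'') := by rw [h3]
            have h6 : cs.length (cs.wordProd ω'') ≤ ω''.length := cs.length_wordProd_le ω''
            have h7 : ω''.length ≤ n := by simpa using Nat.succ_le_succ_iff.mp hlen
            omega)
          (fun k hk => h1 k (List.mem_of_mem_eraseIdx hk))
        refine ⟨χ, hχ1, hχ2, ?_⟩
        rw [hχ3, ← hjw, cs.wordProd_cons, h3]

lemma exists_reduced_word_P {u : W} (hu : u ∈ StandardParabolic cs I) :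
    ∃ ω : List B, (∀ i ∈ ω, i ∈ I) ∧ cs.IsReduced ω ∧ cs.wordProd ω = u := by
  obtain ⟨ω, hω, rfl⟩ := exists_word_P cs I hu
  exact word_reduce cs I ω.length ω le_rfl hω

lemma descent_P {u : W} (hu : u ∈ StandardParabolic cs I) (hne : u ≠ 1) :
    ∃ i ∈ I, cs.length (cs.simple i * u) < cs.length u ∧
      cs.simple i * u ∈ StandardParabolic cs I := by
  obtain ⟨ω, hω, hred, rfl⟩ := exists_reduced_word_P cs I hu
  match ω with
  | [] => exact absurd (cs.wordProd_nil) hne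
  | i :: ω' =>
    refine ⟨i, hω i (List.mem_cons_self), ?_, ?_⟩
    · have hcan : cs.simple i * cs.wordProd (i :: ω') = cs.wordProd ω' := by
        rw [cs.wordProd_cons, ← mul_assoc, cs.simple_mul_simple_self, one_mul]
      have hred' : cs.IsReduced ω' := by
        have := hred.drop 1
        simpa using this
      have e1 : cs.length (cs.wordProd (i :: ω')) = ω'.length + 1 := by
        rw [hred]; simp
      have e2 : cs.length (cs.wordProd ω') = ω'.length := hred'
      rw [hcan, e1, e2]
      omega
    · rw [cs.wordProd_cons, ← mul_assoc, cs.simple_mul_simple_self, one_mul]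
      exact mem_P_of_word cs I (fun j hj => hω j (List.mem_cons_of_mem _ hj))

/-- Length is additive on `W_I ×ₗ n` when `n` has minimal length in its coset `W_I n`. -/
lemma add_of_min {n : W} (hmin : ∀ u ∈ StandardParabolic cs I, cs.length n ≤ cs.length (u * n)) :
    ∀ u ∈ StandardParabolic cs I, cs.length (u * n) = cs.length u + cs.length n := by
  suffices h : ∀ m u, u ∈ StandardParabolic cs I → cs.length u = m →
      cs.length (u * n) = cs.length u + cs.length n by
    exact fun u hu => h (cs.length u) u hu rfl
  intro m
  induction m using Nat.strong_induction_on with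
  | _ m ih =>
  intro u hu hlen
  subst hlen
  rcases eq_or_ne u 1 with rfl | hne
  · simp
  · obtain ⟨i, hiI, hdesc, hmem⟩ := descent_P cs I hu hne
    set u' := cs.simple i * u with hu'
    have huu' : u = cs.simple i * u' := by
      rw [hu', ← mul_assoc, cs.simple_mul_simple_self, one_mul]
    have hlu' : cs.length u' + 1 = cs.length u := by
      have h := cs.length_simple_mul u i
      rw [← hu'] at h
      omega
    have ihu' : cs.length (u' * n) = cs.length u' + cs.length n :=
      ih (cs.length u') (by omega) u' hmem rfl
    -- get reduced words
    obtain ⟨ω1, hω1I, hω1red, hω1⟩ := exists_reduced_word_P cs I hmem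
    obtain ⟨ω2, hω2red, hω2⟩ := cs.exists_reduced_word' n
    have hcat : cs.wordProd (ω1 ++ ω2) = u' * n := by
      rw [cs.wordProd_append, hω1, ← hω2]
    have hl1 : cs.length u' = ω1.length := by rw [← hω1]; exact hω1red
    have hl2 : cs.length n = ω2.length := by rw [hω2]; exact hω2red
    have hcatred : cs.IsReduced (ω1 ++ ω2) := by
      unfold CoxeterSystem.IsReduced
      rw [hcat, ihu', List.length_append, hl1, hl2]
    -- suppose length goes down; derive contradiction
    rcases cs.length_simple_mul (u' * n) i with hup | hdown
    · have e : cs.length (u * n) = cs.length (u' * n) + 1 := by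
        rw [huu', mul_assoc]
        exact hup
      omega
    · exfalso
      have hlt : cs.length (cs.simple i * cs.wordProd (ω1 ++ ω2))
          < cs.length (cs.wordProd (ω1 ++ ω2)) := by
        rw [hcat]
        have hne2 := cs.length_simple_mul_ne (u' * n) i
        omega
      obtain ⟨j, hj, hjw⟩ := strong_exchange_left cs (cs.isReflection_simple i) hlt
      rw [hcat] at hjw
      rcases Nat.lt_or_ge j ω1.length with hcase | hcase
      · rw [List.eraseIdx_append_of_lt_length hcase, cs.wordProd_append] at hjw
        have hju : cs.simple i * u' = cs.wordProd (ω1.eraseIdx j) := by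
          have hjw' : (cs.simple i * u') * n = cs.wordProd (ω1.eraseIdx j) * n := by
            rw [mul_assoc, hjw, ← hω2]
          exact mul_right_cancel hjw'
        have hbound : cs.length (cs.simple i * u') ≤ (ω1.eraseIdx j).length := by
          rw [hju]; exact cs.length_wordProd_le _
        have hlen1 : (ω1.eraseIdx j).length + 1 = ω1.length :=
          List.length_eraseIdx_add_one hcase
        have : cs.length (cs.simple i * u') = cs.length u := by rw [← huu']
        omega
      · rw [List.eraseIdx_append_of_length_le hcase, cs.wordProd_append] at hjw
        have hj2 : j - ω1.length < ω2.length := by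
          rw [List.length_append] at hj
          omega
        rw [hω1] at hjw
        have hv : (u'⁻¹ * cs.simple i * u') * n = cs.wordProd (ω2.eraseIdx (j - ω1.length)) := by
          calc (u'⁻¹ * cs.simple i * u') * n
              = u'⁻¹ * (cs.simple i * (u' * n)) := by group
            _ = u'⁻¹ * (u' * cs.wordProd (ω2.eraseIdx (j - ω1.length))) := by rw [hjw]
            _ = cs.wordProd (ω2.eraseIdx (j - ω1.length)) := by group
        have hvP : u'⁻¹ * cs.simple i * u' ∈ StandardParabolic cs I := by
          have hsi : cs.simple i ∈ StandardParabolic cs I :=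
            Subgroup.subset_closure ⟨i, hiI, rfl⟩
          exact mul_mem (mul_mem (inv_mem hmem) hsi) hmem
        have hlow : cs.length ((u'⁻¹ * cs.simple i * u') * n) ≤ (ω2.eraseIdx (j - ω1.length)).length := by
          rw [hv]; exact cs.length_wordProd_le _
        have hlen2 : (ω2.eraseIdx (j - ω1.length)).length + 1 = ω2.length :=
          List.length_eraseIdx_add_one hj2
        have hmin2 := hmin _ hvP
        omega

/-- Every coset `W_I g` contains an element of minimal length. -/
lemma exists_min (g : W) : ∃ n : W, (∃ u ∈ StandardParabolic cs I, n = u * g) ∧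
    ∀ u ∈ StandardParabolic cs I, cs.length n ≤ cs.length (u * g) := by
  classical
  set S : Set ℕ := {k | ∃ u ∈ StandardParabolic cs I, cs.length (u * g) = k} with hS
  have hSne : S.Nonempty := ⟨cs.length (1 * g), 1, one_mem _, rfl⟩
  obtain ⟨u₀, hu₀, hlen⟩ : ∃ u ∈ StandardParabolic cs I, cs.length (u * g) = sInf S :=
    Nat.sInf_mem hSne
  refine ⟨u₀ * g, ⟨u₀, hu₀, rfl⟩, fun u hu => ?_⟩
  rw [hlen]
  exact Nat.sInf_le ⟨u, hu, rfl⟩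

/-- If `ℓ(s n) > ℓ(n)` for all `s ∈ I`, then `n` is minimal in its coset `W_I n`. -/
lemma min_of_L {n : W} (hL : ∀ i ∈ I, cs.length n < cs.length (cs.simple i * n)) :
    ∀ u ∈ StandardParabolic cs I, cs.length n ≤ cs.length (u * n) := by
  obtain ⟨n₀, ⟨u₀, hu₀, hn₀⟩, hmin⟩ := exists_min cs I n
  have hmin' : ∀ u ∈ StandardParabolic cs I, cs.length n₀ ≤ cs.length (u * n₀) := by
    intro u hu
    have e : u * n₀ = (u * u₀) * n := by rw [hn₀, mul_assoc]
    rw [e]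
    exact hmin _ (mul_mem hu hu₀)
  have hadd := add_of_min cs I hmin'
  have hnu : n = u₀⁻¹ * n₀ := by rw [hn₀, ← mul_assoc, inv_mul_cancel, one_mul]
  rcases eq_or_ne u₀ 1 with rfl | hne
  · have hn : n₀ = n := by rw [hn₀, one_mul]
    subst hn
    exact hmin
  · exfalso
    have hne' : u₀⁻¹ ≠ 1 := by simpa using hne
    obtain ⟨i, hiI, hdesc, hmem⟩ := descent_P cs I (inv_mem hu₀) hne'
    have h1 : cs.length (cs.simple i * n) = cs.length (cs.simple i * u₀⁻¹) + cs.length n₀ := by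
      rw [hnu, ← mul_assoc]
      exact hadd _ hmem
    have h2 : cs.length n = cs.length u₀⁻¹ + cs.length n₀ := by
      rw [hnu]
      exact hadd _ (inv_mem hu₀)
    have := hL i hiI
    omega

lemma add_of_L {n : W} (hL : ∀ i ∈ I, cs.length n < cs.length (cs.simple i * n)) :
    ∀ u ∈ StandardParabolic cs I, cs.length (u * n) = cs.length u + cs.length n :=
  add_of_min cs I (min_of_L cs I hL)

lemma add_of_R {n : W} (hR : ∀ i ∈ I, cs.length n < cs.length (n * cs.simple i)) :
    ∀ u ∈ StandardParabolic cs I, cs.length (n * u) = cs.length n + cs.length u := by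
  intro u hu
  have hL : ∀ i ∈ I, cs.length n⁻¹ < cs.length (cs.simple i * n⁻¹) := by
    intro i hi
    have e : cs.length (cs.simple i * n⁻¹) = cs.length (n * cs.simple i) := by
      rw [← cs.length_inv (cs.simple i * n⁻¹), mul_inv_rev, inv_inv, cs.inv_simple]
    rw [cs.length_inv n, e]
    exact hR i hi
  have := add_of_L cs I hL u⁻¹ (inv_mem hu)
  rw [← cs.length_inv (n * u), mul_inv_rev, this, cs.length_inv, cs.length_inv, add_comm]

lemma simple_mem_P {i : B} (hi : i ∈ I) : cs.simple i ∈ StandardParabolic cs I :=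
  Subgroup.subset_closure ⟨i, hi, rfl⟩

lemma simple_ne_one (i : B) : cs.simple i ≠ 1 := by
  intro h
  have := cs.length_simple i
  rw [h, cs.length_one] at this
  omega

lemma conj_mem_P {g p : W} (hg : g ∈ Subgroup.normalizer (StandardParabolic cs I : Set W))
    (hp : p ∈ StandardParabolic cs I) : g * p * g⁻¹ ∈ StandardParabolic cs I :=
  (Subgroup.mem_normalizer_iff.mp hg p).mp hp

/-- If `n` normalizes `W_I` and `ℓ(n s) > ℓ(n)` for all `s ∈ I`, then also
`ℓ(s n) > ℓ(n)` for all `s ∈ I`. -/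
lemma R_to_L {n : W} (hn : n ∈ Subgroup.normalizer (StandardParabolic cs I : Set W))
    (hR : ∀ i ∈ I, cs.length n < cs.length (n * cs.simple i)) :
    ∀ i ∈ I, cs.length n < cs.length (cs.simple i * n) := by
  intro i hi
  have hv : n⁻¹ * cs.simple i * n ∈ StandardParabolic cs I := by
    have := conj_mem_P cs I (inv_mem hn) (simple_mem_P cs I hi)
    rwa [inv_inv] at this
  have hvne : n⁻¹ * cs.simple i * n ≠ 1 := by
    intro h
    have : cs.simple i = 1 := by
      have := congrArg (fun x => n * x * n⁻¹) h
      simpa [mul_assoc] using this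
    exact simple_ne_one cs i this
  have hsn : cs.simple i * n = n * (n⁻¹ * cs.simple i * n) := by group
  have hadd := add_of_R cs I hR _ hv
  have hvlen : 1 ≤ cs.length (n⁻¹ * cs.simple i * n) := by
    rcases Nat.eq_zero_or_pos (cs.length (n⁻¹ * cs.simple i * n)) with h | h
    · exact absurd (cs.length_eq_zero_iff.mp h) hvne
    · exact h
  rw [hsn, hadd]
  omega

lemma L_to_R {n : W} (hn : n ∈ Subgroup.normalizer (StandardParabolic cs I : Set W))
    (hL : ∀ i ∈ I, cs.length n < cs.length (cs.simple i * n)) :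
    ∀ i ∈ I, cs.length n < cs.length (n * cs.simple i) := by
  intro i hi
  have hv : n * cs.simple i * n⁻¹ ∈ StandardParabolic cs I :=
    conj_mem_P cs I hn (simple_mem_P cs I hi)
  have hvne : n * cs.simple i * n⁻¹ ≠ 1 := by
    intro h
    have : cs.simple i = 1 := by
      have := congrArg (fun x => n⁻¹ * x * n) h
      simpa [mul_assoc] using this
    exact simple_ne_one cs i this
  have hsn : n * cs.simple i = (n * cs.simple i * n⁻¹) * n := by group
  have hadd := add_of_L cs I hL _ hv
  have hvlen : 1 ≤ cs.length (n * cs.simple i * n⁻¹) := by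
    rcases Nat.eq_zero_or_pos (cs.length (n * cs.simple i * n⁻¹)) with h | h
    · exact absurd (cs.length_eq_zero_iff.mp h) hvne
    · exact h
  rw [hsn, hadd]
  omega

/-- A minimal coset representative normalizing `W_I` conjugates `I`-simples to `I`-simples. -/
lemma conj_simple_of_R {n : W} (hn : n ∈ Subgroup.normalizer (StandardParabolic cs I : Set W))
    (hR : ∀ i ∈ I, cs.length n < cs.length (n * cs.simple i)) {i : B} (hi : i ∈ I) :
    ∃ j ∈ I, n * cs.simple i * n⁻¹ = cs.simple j := by
  have hL := R_to_L cs I hn hR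
  have htP : n * cs.simple i * n⁻¹ ∈ StandardParabolic cs I :=
    conj_mem_P cs I hn (simple_mem_P cs I hi)
  have he : (n * cs.simple i * n⁻¹) * n = n * cs.simple i := by group
  have h1 : cs.length (n * cs.simple i) = cs.length n + 1 := by
    have h := cs.length_mul_simple n i
    have := hR i hi
    omega
  have h2 : cs.length ((n * cs.simple i * n⁻¹) * n)
      = cs.length (n * cs.simple i * n⁻¹) + cs.length n :=
    add_of_L cs I hL _ htP
  have hlen1 : cs.length (n * cs.simple i * n⁻¹) = 1 := by
    rw [he, h1] at h2
    omega
  obtain ⟨ω, hωI, hωred, hωprod⟩ := exists_reduced_word_P cs I htP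
  have : ω.length = 1 := by
    rw [← hωred, hωprod, hlen1]
  obtain ⟨j, rfl⟩ := List.length_eq_one_iff.mp this
  refine ⟨j, hωI j (List.mem_singleton_self j), ?_⟩
  rw [← hωprod, cs.wordProd_singleton]

end NSD

/-- `N_W(W_I) = W_I ⋊ N_I`, where `N_I` is the set of minimal length coset representatives,
together with the length additivity `ℓ(w_I n_I) = ℓ(w_I) + ℓ(n_I)`. -/
theorem normalizer_semidirect_product (cs : CoxeterSystem M W) (I : Set B) :
    (1 : W) ∈ {n : W | n ∈ Subgroup.normalizer (StandardParabolic cs I : Set W) ∧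
        ∀ i ∈ I, cs.length n < cs.length (n * cs.simple i)} ∧
    (∀ a ∈ {n : W | n ∈ Subgroup.normalizer (StandardParabolic cs I : Set W) ∧
        ∀ i ∈ I, cs.length n < cs.length (n * cs.simple i)},
      ∀ b ∈ {n : W | n ∈ Subgroup.normalizer (StandardParabolic cs I : Set W) ∧
        ∀ i ∈ I, cs.length n < cs.length (n * cs.simple i)},
      a * b ∈ {n : W | n ∈ Subgroup.normalizer (StandardParabolic cs I : Set W) ∧
        ∀ i ∈ I, cs.length n < cs.length (n * cs.simple i)}) ∧
    (∀ a ∈ {n : W | n ∈ Subgroup.normalizer (StandardParabolic cs I : Set W) ∧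
        ∀ i ∈ I, cs.length n < cs.length (n * cs.simple i)},
      a⁻¹ ∈ {n : W | n ∈ Subgroup.normalizer (StandardParabolic cs I : Set W) ∧
        ∀ i ∈ I, cs.length n < cs.length (n * cs.simple i)}) ∧
    (∀ g ∈ Subgroup.normalizer (StandardParabolic cs I : Set W), ∃ wI ∈ StandardParabolic cs I,
      ∃ nI ∈ {n : W | n ∈ Subgroup.normalizer (StandardParabolic cs I : Set W) ∧
        ∀ i ∈ I, cs.length n < cs.length (n * cs.simple i)}, g = wI * nI) ∧
    (∀ g ∈ StandardParabolic cs I,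
      g ∈ {n : W | n ∈ Subgroup.normalizer (StandardParabolic cs I : Set W) ∧
        ∀ i ∈ I, cs.length n < cs.length (n * cs.simple i)} → g = 1) ∧
    (∀ g ∈ Subgroup.normalizer (StandardParabolic cs I : Set W), ∀ p ∈ StandardParabolic cs I,
      g⁻¹ * p * g ∈ StandardParabolic cs I) ∧
    (∀ wI ∈ StandardParabolic cs I,
      ∀ nI ∈ {n : W | n ∈ Subgroup.normalizer (StandardParabolic cs I : Set W) ∧
        ∀ i ∈ I, cs.length n < cs.length (n * cs.simple i)},
      cs.length (wI * nI) = cs.length wI + cs.length nI) := by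
  refine ⟨?_, ?_, ?_, ?_, ?_, ?_, ?_⟩
  · -- 1 ∈ N_I
    refine ⟨one_mem _, fun i _ => ?_⟩
    rw [one_mul, cs.length_one, cs.length_simple]
    omega
  · -- product closure
    rintro a ⟨haN, haR⟩ b ⟨hbN, hbR⟩
    refine ⟨mul_mem haN hbN, fun i hi => ?_⟩
    obtain ⟨j, hjI, hbj⟩ := NSD.conj_simple_of_R cs I hbN hbR hi
    have hnlt : ¬ cs.length (a * b * cs.simple i) < cs.length (a * b) := by
      intro hlt
      have h1 : NSD.eta cs (a * b) (cs.simple i) = 1 :=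
        (NSD.eta_eq_one_iff cs (cs.isReflection_simple i)).mpr hlt
      have h2 := NSD.eta_mul cs a b (cs.simple i)
      have h3 : NSD.eta cs b (cs.simple i) = 0 :=
        (NSD.eta_eq_zero_iff cs (cs.isReflection_simple i)).mpr (hbR i hi)
      have h4 : NSD.eta cs a (cs.simple j) = 0 :=
        (NSD.eta_eq_zero_iff cs (cs.isReflection_simple j)).mpr (haR j hjI)
      rw [h1, h3, hbj, h4] at h2
      exact absurd h2 (by decide)
    have hne : cs.length (a * b * cs.simple i) ≠ cs.length (a * b) :=
      cs.length_mul_simple_ne (a * b) i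
    omega
  · -- inverse closure
    rintro a ⟨haN, haR⟩
    refine ⟨inv_mem haN, fun i hi => ?_⟩
    have hL := NSD.R_to_L cs I haN haR i hi
    have e : cs.length (a⁻¹ * cs.simple i) = cs.length (cs.simple i * a) := by
      rw [← cs.length_inv (a⁻¹ * cs.simple i), mul_inv_rev, inv_inv, cs.inv_simple]
    rw [cs.length_inv, e]
    exact hL
  · -- decomposition
    intro g hg
    obtain ⟨n₀, ⟨u₀, hu₀, hn₀⟩, hmin⟩ := NSD.exists_min cs I g
    have hminn : ∀ u ∈ StandardParabolic cs I, cs.length n₀ ≤ cs.length (u * n₀) := by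
      intro u hu
      have e : u * n₀ = (u * u₀) * g := by rw [hn₀, mul_assoc]
      rw [e]
      exact hmin _ (mul_mem hu hu₀)
    have hn₀N : n₀ ∈ Subgroup.normalizer (StandardParabolic cs I : Set W) := by
      rw [hn₀]
      exact mul_mem (Subgroup.le_normalizer hu₀) hg
    have hR : ∀ i ∈ I, cs.length n₀ < cs.length (n₀ * cs.simple i) := by
      intro i hi
      have hv : n₀ * cs.simple i * n₀⁻¹ ∈ StandardParabolic cs I :=
        NSD.conj_mem_P cs I hn₀N (Subgroup.subset_closure ⟨i, hi, rfl⟩)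
      have hvne : n₀ * cs.simple i * n₀⁻¹ ≠ 1 := by
        intro h
        have : cs.simple i = 1 := by
          have := congrArg (fun x => n₀⁻¹ * x * n₀) h
          simpa [mul_assoc] using this
        exact NSD.simple_ne_one cs i this
      have hsn : n₀ * cs.simple i = (n₀ * cs.simple i * n₀⁻¹) * n₀ := by group
      have hadd := NSD.add_of_min cs I hminn _ hv
      have hvlen : 1 ≤ cs.length (n₀ * cs.simple i * n₀⁻¹) := by
        rcases Nat.eq_zero_or_pos (cs.length (n₀ * cs.simple i * n₀⁻¹)) with h | h
        · exact absurd (cs.length_eq_zero_iff.mp h) hvne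
        · exact h
      rw [hsn, hadd]
      omega
    refine ⟨u₀⁻¹, inv_mem hu₀, n₀, ⟨hn₀N, hR⟩, ?_⟩
    rw [hn₀, ← mul_assoc, inv_mul_cancel, one_mul]
  · -- triviality of intersection
    rintro g hgP ⟨_, hgR⟩
    by_contra hne
    obtain ⟨i, hiI, hdesc, _⟩ := NSD.descent_P cs I (inv_mem hgP) (by simpa using hne)
    have e : cs.length (cs.simple i * g⁻¹) = cs.length (g * cs.simple i) := by
      rw [← cs.length_inv (cs.simple i * g⁻¹), mul_inv_rev, inv_inv, cs.inv_simple]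
    rw [e, cs.length_inv] at hdesc
    have := hgR i hiI
    omega
  · -- normality
    intro g hg p hp
    have := NSD.conj_mem_P cs I (inv_mem hg) hp
    rwa [inv_inv] at this
  · -- length additivity
    rintro wI hwI nI ⟨hnN, hnR⟩
    exact NSD.add_of_L cs I (NSD.R_to_L cs I hnN hnR) wI hwI
end
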